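/- Let X, Y be positive definite real symmetric m×m matrices and let log_c(X,Y) := (1/(1-c))·(X^(1-c)·Y^(c-1) − I) for c ≠ 1. Then the limit as c → 1 of log_c(X,Y) equals log(X) − log(Y). -/

import Mathlib

open Filter Topology Matrix

/-- Matrix power of a Hermitian (symmetric) real matrix via spectral decomposition. -/
noncomputable def mpow {m : ℕ} (A : Matrix (Fin m) (Fin m) ℝ) (c : ℝ) :
    Matrix (Fin m) (Fin m) ℝ :=
  if hA : A.IsHermitian then
    (hA.eigenvectorUnitary : Matrix (Fin m) (Fin m) ℝ) *
      Matrix.diagonal (fun i => hA.eigenvalues i ^ c) *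
      star (hA.eigenvectorUnitary : Matrix (Fin m) (Fin m) ℝ)
  else 0

/-- Matrix logarithm of a Hermitian (symmetric) real matrix via spectral decomposition. -/
noncomputable def mlog {m : ℕ} (A : Matrix (Fin m) (Fin m) ℝ) :
    Matrix (Fin m) (Fin m) ℝ :=
  if hA : A.IsHermitian then
    (hA.eigenvectorUnitary : Matrix (Fin m) (Fin m) ℝ) *
      Matrix.diagonal (fun i => Real.log (hA.eigenvalues i)) *
      star (hA.eigenvectorUnitary : Matrix (Fin m) (Fin m) ℝ)
  else 0

lemma mpow_zero {m : ℕ} {A : Matrix (Fin m) (Fin m) ℝ} (hA : A.IsHermitian) :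
    mpow A 0 = 1 := by
  rw [mpow, dif_pos hA]
  simp only [Real.rpow_zero]
  rw [Matrix.diagonal_one, Matrix.mul_one]
  exact Unitary.mul_star_self_of_mem hA.eigenvectorUnitary.2

lemma hasDerivAt_mpow_entry {m : ℕ} {A : Matrix (Fin m) (Fin m) ℝ} (hA : A.PosDef)
    (i k : Fin m) :
    HasDerivAt (fun t : ℝ => mpow A t i k) (mlog A i k) 0 := by
  have hAh := hA.isHermitian
  have h1 : ∀ t : ℝ, mpow A t i k =
      ∑ p, (hAh.eigenvectorUnitary : Matrix (Fin m) (Fin m) ℝ) i p *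
        hAh.eigenvalues p ^ t *
        (star (hAh.eigenvectorUnitary : Matrix (Fin m) (Fin m) ℝ)) p k := by
    intro t
    rw [mpow, dif_pos hAh, Matrix.mul_apply]
    simp only [Matrix.mul_diagonal]
  have h2 : mlog A i k =
      ∑ p, (hAh.eigenvectorUnitary : Matrix (Fin m) (Fin m) ℝ) i p *
        Real.log (hAh.eigenvalues p) *
        (star (hAh.eigenvectorUnitary : Matrix (Fin m) (Fin m) ℝ)) p k := by
    rw [mlog, dif_pos hAh, Matrix.mul_apply]
    simp only [Matrix.mul_diagonal]
  simp only [h1, h2]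
  apply HasDerivAt.fun_sum
  intro p _
  have hpos := hA.eigenvalues_pos p
  have h := (((Real.hasStrictDerivAt_const_rpow hpos 0).hasDerivAt).const_mul
      ((hAh.eigenvectorUnitary : Matrix (Fin m) (Fin m) ℝ) i p)).mul_const
      ((star (hAh.eigenvectorUnitary : Matrix (Fin m) (Fin m) ℝ)) p k)
  rw [Real.rpow_zero, one_mul] at h
  exact h

theorem limit_generalized_matrix_log_discrepancy {m : ℕ}
    (X Y : Matrix (Fin m) (Fin m) ℝ) (hX : X.PosDef) (hY : Y.PosDef) :
    Tendsto (fun c : ℝ => (1 / (1 - c)) • (mpow X (1 - c) * mpow Y (c - 1) - 1))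
      (𝓝[≠] 1) (𝓝 (mlog X - mlog Y)) := by
  refine tendsto_pi_nhds.mpr fun i => ?_
  refine tendsto_pi_nhds.mpr fun j => ?_
  have key : HasDerivAt (fun t : ℝ => (mpow X t * mpow Y (-t)) i j)
      ((mlog X - mlog Y) i j) 0 := by
    simp only [Matrix.mul_apply]
    have hsum : HasDerivAt (fun t : ℝ => ∑ k, mpow X t i k * mpow Y (-t) k j)
        (∑ k, (mlog X i k * mpow Y (-(0:ℝ)) k j + mpow X 0 i k * -(mlog Y k j))) 0 := by
      apply HasDerivAt.fun_sum
      intro k _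
      have hx := hasDerivAt_mpow_entry hX i k
      have hy0 : HasDerivAt (fun t : ℝ => mpow Y t k j) (mlog Y k j) (-(0:ℝ)) := by
        rw [neg_zero]; exact hasDerivAt_mpow_entry hY k j
      have hy := hy0.comp 0 (hasDerivAt_neg 0)
      simp only [Function.comp_def, mul_neg_one] at hy
      exact hx.mul hy
    convert hsum using 1
    simp only [neg_zero, mpow_zero hX.isHermitian, mpow_zero hY.isHermitian]
    have e1 : (mlog X) i j = ∑ k, mlog X i k * (1 : Matrix (Fin m) (Fin m) ℝ) k j := by
      rw [← Matrix.mul_apply, Matrix.mul_one]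
    have e2 : (mlog Y) i j = ∑ k, (1 : Matrix (Fin m) (Fin m) ℝ) i k * mlog Y k j := by
      rw [← Matrix.mul_apply, Matrix.one_mul]
    rw [Matrix.sub_apply, e1, e2, ← Finset.sum_sub_distrib]
    congr 1; ext k; ring
  have hslope := hasDerivAt_iff_tendsto_slope.mp key
  have hcomp : Tendsto (fun c : ℝ => 1 - c) (𝓝[≠] 1) (𝓝[≠] 0) := by
    apply tendsto_nhdsWithin_of_tendsto_nhds_of_eventually_within
    · have h1 : Tendsto (fun c : ℝ => 1 - c) (𝓝 1) (𝓝 (1 - 1)) :=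
        tendsto_const_nhds.sub tendsto_id
      simpa using h1.mono_left nhdsWithin_le_nhds
    · filter_upwards [self_mem_nhdsWithin] with c hc
      simp only [Set.mem_compl_iff, Set.mem_singleton_iff] at hc ⊢
      intro h; apply hc; linarith
  refine (hslope.comp hcomp).congr fun c => ?_
  show slope (fun t : ℝ => (mpow X t * mpow Y (-t)) i j) 0 (1 - c) = _
  rw [slope_def_field]
  have hg0 : mpow X 0 * mpow Y (-(0:ℝ)) = 1 := by
    rw [neg_zero, mpow_zero hX.isHermitian, mpow_zero hY.isHermitian, Matrix.one_mul]
  show ((mpow X (1 - c) * mpow Y (-(1 - c))) i j - (mpow X 0 * mpow Y (-(0:ℝ))) i j) /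
      (1 - c - 0) = _
  rw [hg0, show -(1 - c) = c - 1 from by ring, sub_zero]
  rw [Matrix.smul_apply, Matrix.sub_apply, smul_eq_mul, one_div, div_eq_inv_mul]
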